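/- Let (X, ρ, μ) be a separable metric probability space and let γ > 0 be fixed. Define the γ-missing mass of a sample S_n = (X_1, …, X_n) as L_γ(S_n) = μ(X ∖ ⋃_{i=1}^n B_γ(X_i)), where B_γ(x) is the open ball of radius γ around x. Then there exists a function u_γ : ℕ → ℝ₊ with u_γ(n) → 0 as n → ∞ such that, for X_1, …, X_n drawn i.i.d. from μ and all t > 0, P[ L_γ(S_n) ≥ u_γ(n) + t ] ≤ exp(−n t²). -/

import Mathlib

open MeasureTheory Filter Metric
open scoped ENNReal

/-- **Concentration of the `γ`-missing mass.** For a separable metric probability space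
`(X, ρ, μ)` and fixed `γ > 0`, there is a positive sequence `u_γ(n) → 0` such that for
an i.i.d. sample `X_1, …, X_n ∼ μ`,
`P[ μ(X ∖ ⋃_i B_γ(X_i)) ≥ u_γ(n) + t ] ≤ exp(−n t²)` for all `t > 0`. -/
theorem missing_mass_concentration {X : Type*} [MetricSpace X] [MeasurableSpace X]
    [BorelSpace X] (μ : Measure X) [IsProbabilityMeasure μ]
    (hsep : ∃ X' : Set X, MeasurableSet X' ∧ μ X' = 1 ∧ TopologicalSpace.IsSeparable X')
    (γ : ℝ) (hγ : 0 < γ) :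
    ∃ u : ℕ → ℝ, (∀ n, 0 < u n) ∧ Tendsto u atTop (nhds 0) ∧
      ∀ n : ℕ, ∀ t : ℝ, 0 < t →
        (Measure.pi fun _ : Fin n => μ)
            {ω : Fin n → X | ENNReal.ofReal (u n + t) ≤ μ (⋃ i, Metric.ball (ω i) γ)ᶜ}
          ≤ ENNReal.ofReal (Real.exp (-(n : ℝ) * t ^ 2)) := by
  classical
  obtain ⟨X', hX'meas, hX'μ, hX'sep⟩ := hsep
  obtain ⟨c, hc_count, hc_sub⟩ := hX'sep
  have hcne : c.Nonempty := by
    rcases c.eq_empty_or_nonempty with h | h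
    · exfalso
      rw [h, closure_empty, Set.subset_empty_iff] at hc_sub
      rw [hc_sub] at hX'μ
      simp at hX'μ
    · exact h
  obtain ⟨f, hf⟩ := Set.Countable.exists_eq_range hc_count hcne
  set S : ℕ → Set X := fun M => ⋃ j ∈ Finset.range M, ball (f j) (γ/2) with hSdef
  have hSmeas : ∀ M, MeasurableSet (S M) := fun M =>
    (Finset.range M).measurableSet_biUnion (fun j _ => measurableSet_ball)
  have hSmono : Monotone S := by
    intro p q hpq
    exact Set.biUnion_subset_biUnion_left (Finset.range_subset_range.mpr hpq)
  have hcover : X' ⊆ ⋃ M, S M := by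
    intro x hx
    obtain ⟨y, hy, hxy⟩ := Metric.mem_closure_iff.mp (hc_sub hx) (γ/2) (by linarith)
    rw [hf] at hy
    obtain ⟨j, rfl⟩ := hy
    exact Set.mem_iUnion.mpr ⟨j+1,
      Set.mem_biUnion (Finset.self_mem_range_succ j) (Metric.mem_ball.mpr hxy)⟩
  have hfull : μ (⋃ M, S M) = 1 :=
    le_antisymm prob_le_one (hX'μ ▸ measure_mono hcover)
  have hN : ∀ k : ℕ, ∃ M, μ (S M)ᶜ ≤ ENNReal.ofReal (1/(k+1)) := by
    intro k
    set δ := ENNReal.ofReal (1/((k:ℝ)+1)) with hδdef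
    have hδpos : 0 < δ := ENNReal.ofReal_pos.mpr (by positivity)
    have hsup : (⨆ M, μ (S M)) = 1 := by
      rw [← (hSmono.directed_le).measure_iUnion, hfull]
    have hlt : 1 - δ < ⨆ M, μ (S M) := by
      rw [hsup]
      exact ENNReal.sub_lt_self ENNReal.one_ne_top one_ne_zero hδpos.ne'
    obtain ⟨M, hM⟩ := lt_iSup_iff.mp hlt
    refine ⟨M, ?_⟩
    rw [prob_compl_eq_one_sub (hSmeas M)]
    calc 1 - μ (S M) ≤ 1 - (1 - δ) := tsub_le_tsub_left hM.le 1
    _ ≤ δ := tsub_tsub_le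
  choose N hNspec using hN
  set v : ℕ → ℕ → ℝ := fun k n => 1/((k:ℝ)+1) + ((N k : ℝ) * Real.log 2)/n with hvdef
  have hvnonneg : ∀ k n, 0 ≤ v k n := by
    intro k n
    show (0:ℝ) ≤ 1/((k:ℝ)+1) + ((N k : ℝ) * Real.log 2)/n
    have h1 : (0:ℝ) ≤ 1/((k:ℝ)+1) := by positivity
    have h2 : (0:ℝ) ≤ ((N k : ℝ) * Real.log 2)/n :=
      div_nonneg (mul_nonneg (Nat.cast_nonneg _) (Real.log_nonneg one_le_two)) (Nat.cast_nonneg n)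
    linarith
  set u : ℕ → ℝ := fun n => if h : n = 0 then 1 else
    2/(n:ℝ) + (Finset.range n).inf' (Finset.nonempty_range_iff.mpr h) (fun k => v k n) with hudef
  have huval : ∀ n (h : n ≠ 0), u n =
      2/(n:ℝ) + (Finset.range n).inf' (Finset.nonempty_range_iff.mpr h) (fun k => v k n) := by
    intro n h
    simp only [hudef, dif_neg h]
  have hupos : ∀ n, 0 < u n := by
    intro n
    by_cases h : n = 0
    · simp [hudef, h]
    · rw [huval n h]
      have hn : (0:ℝ) < n := Nat.cast_pos.mpr (Nat.pos_of_ne_zero h)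
      have h1 : (0:ℝ) < 2/(n:ℝ) := by positivity
      have h2 : (0:ℝ) ≤ (Finset.range n).inf' (Finset.nonempty_range_iff.mpr h) (fun k => v k n) :=
        Finset.le_inf' _ _ (fun k _ => hvnonneg k n)
      linarith
  refine ⟨u, hupos, ?_, ?_⟩
  · -- Tendsto u atTop (nhds 0)
    rw [Metric.tendsto_atTop]
    intro ε hε
    obtain ⟨K, hK⟩ := exists_nat_gt (2/ε)
    have hKpos : (0:ℝ) < (K:ℝ)+1 := by positivity
    have hKε : 1/((K:ℝ)+1) < ε/2 := by
      have h2 : (2:ℝ) < K * ε := by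
        have := (div_lt_iff₀ hε).mp hK
        linarith
      rw [div_lt_iff₀ hKpos]
      nlinarith
    set C : ℝ := 2 + (N K : ℝ) * Real.log 2 with hCdef
    have hCpos : (0:ℝ) < C := by
      have := mul_nonneg (Nat.cast_nonneg (N K)) (Real.log_nonneg one_le_two)
      linarith
    obtain ⟨M, hM⟩ := exists_nat_gt (C/(ε/2))
    refine ⟨max (K+1) M, ?_⟩
    intro n hn
    have hnK : K + 1 ≤ n := le_trans (le_max_left _ _) hn
    have hnM : (M:ℝ) ≤ n := Nat.cast_le.mpr (le_trans (le_max_right _ _) hn)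
    have hn0 : n ≠ 0 := by omega
    have hnpos : (0:ℝ) < n := Nat.cast_pos.mpr (Nat.pos_of_ne_zero hn0)
    have hKmem : K ∈ Finset.range n := Finset.mem_range.mpr (by omega)
    have hub : u n ≤ 2/(n:ℝ) + v K n := by
      rw [huval n hn0]
      have h := Finset.inf'_le (fun k => v k n) hKmem
      exact add_le_add_right h _
    have hCn : C/(n:ℝ) < ε/2 := by
      have hx : C/(ε/2) < (n:ℝ) := lt_of_lt_of_le hM hnM
      rw [div_lt_iff₀ (by positivity : (0:ℝ) < ε/2)] at hx
      rw [div_lt_iff₀ hnpos]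
      linarith
    have hval : 2/(n:ℝ) + v K n = 1/((K:ℝ)+1) + C/(n:ℝ) := by
      simp only [hvdef, hCdef]
      ring
    have hnn : 0 ≤ u n := (hupos n).le
    rw [Real.dist_eq, sub_zero, abs_of_nonneg hnn]
    calc u n ≤ 2/(n:ℝ) + v K n := hub
    _ = 1/((K:ℝ)+1) + C/(n:ℝ) := hval
    _ < ε/2 + ε/2 := by linarith
    _ = ε := by ring
  · -- the concentration bound
    intro n t ht
    by_cases hn0 : n = 0
    · subst hn0
      simp only [Nat.cast_zero, neg_zero, zero_mul, Real.exp_zero, ENNReal.ofReal_one]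
      exact prob_le_one
    by_cases htle : t ≤ 1
    swap
    · -- t > 1 : event is empty
      push_neg at htle
      have hempty : {ω : Fin n → X | ENNReal.ofReal (u n + t) ≤ μ (⋃ i, Metric.ball (ω i) γ)ᶜ}
          = ∅ := by
        ext ω
        simp only [Set.mem_setOf_eq, Set.mem_empty_iff_false, iff_false, not_le]
        calc μ (⋃ i, Metric.ball (ω i) γ)ᶜ ≤ 1 := prob_le_one
        _ < ENNReal.ofReal (u n + t) := by
            rw [← ENNReal.ofReal_one]
            exact ENNReal.ofReal_lt_ofReal_iff (by linarith [hupos n]) |>.mpr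
              (by linarith [hupos n])
      rw [hempty, measure_empty]
      exact zero_le
    -- main case : n ≥ 1, 0 < t ≤ 1
    obtain ⟨k, hkmem, hkeq⟩ :=
      Finset.exists_mem_eq_inf' (Finset.nonempty_range_iff.mpr hn0) (fun k => v k n)
    have hnpos : (0:ℝ) < n := Nat.cast_pos.mpr (Nat.pos_of_ne_zero hn0)
    set m := N k with hmdef
    set a : ℝ := 2/(n:ℝ) + ((m:ℝ) * Real.log 2)/n with hadef
    have hanonneg : 0 ≤ a := by
      rw [hadef]
      have hl := Real.log_nonneg (by norm_num : (1:ℝ) ≤ 2)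
      have h2 : (0:ℝ) ≤ ((m:ℝ) * Real.log 2)/n :=
        div_nonneg (mul_nonneg (Nat.cast_nonneg m) hl) hnpos.le
      have h1 : (0:ℝ) ≤ 2/(n:ℝ) := by positivity
      linarith
    have hun : u n = 1/((k:ℝ)+1) + a := by
      rw [huval n hn0, hkeq]
      simp only [hvdef, hadef]
      ring
    set W : Finset ℕ → Set X := fun J => ⋃ j ∈ J, ball (f j) (γ/2) with hWdef
    have hWmeas : ∀ J : Finset ℕ, MeasurableSet (W J) := fun J =>
      J.measurableSet_biUnion (fun j _ => measurableSet_ball)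
    set T : Finset ℕ → Set (Fin n → X) := fun J =>
      {ω | (∀ i, ω i ∉ W J) ∧ ENNReal.ofReal (a+t) ≤ μ (W J)} with hTdef
    have hincl : {ω : Fin n → X | ENNReal.ofReal (u n + t) ≤ μ (⋃ i, Metric.ball (ω i) γ)ᶜ}
        ⊆ ⋃ J ∈ (Finset.range m).powerset, T J := by
      intro ω hω
      simp only [Set.mem_setOf_eq] at hω
      set Cω : Finset ℕ := (Finset.range m).filter (fun j => ∀ i, ω i ∉ ball (f j) (γ/2))
        with hCωdef
      have hCmem : Cω ∈ (Finset.range m).powerset :=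
        Finset.mem_powerset.mpr (Finset.filter_subset _ _)
      have hsub : (⋃ i, Metric.ball (ω i) γ)ᶜ ⊆ (S m)ᶜ ∪ W Cω := by
        intro x hx
        by_cases hxS : x ∈ S m
        swap
        · exact Or.inl hxS
        right
        simp only [hSdef, Set.mem_iUnion, exists_prop] at hxS
        obtain ⟨j, hj, hxj⟩ := hxS
        by_cases hjC : ∀ i, ω i ∉ ball (f j) (γ/2)
        · exact Set.mem_biUnion (Finset.mem_filter.mpr ⟨hj, hjC⟩) hxj
        · exfalso
          push_neg at hjC
          obtain ⟨i, hi⟩ := hjC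
          apply hx
          refine Set.mem_iUnion.mpr ⟨i, Metric.mem_ball.mpr ?_⟩
          have h1 : dist x (f j) < γ/2 := Metric.mem_ball.mp hxj
          have h2 : dist (ω i) (f j) < γ/2 := Metric.mem_ball.mp hi
          calc dist x (ω i) ≤ dist x (f j) + dist (f j) (ω i) := dist_triangle _ _ _
          _ = dist x (f j) + dist (ω i) (f j) := by rw [dist_comm (f j) (ω i)]
          _ < γ/2 + γ/2 := by linarith
          _ = γ := by ring
      have hμ1 : μ (⋃ i, Metric.ball (ω i) γ)ᶜ ≤ μ (S m)ᶜ + μ (W Cω) :=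
        (measure_mono hsub).trans (measure_union_le _ _)
      have hμ2 : ENNReal.ofReal (u n + t) ≤ ENNReal.ofReal (1/((k:ℝ)+1)) + μ (W Cω) :=
        hω.trans (hμ1.trans (add_le_add_left (hNspec k) _))
      have hsplit : ENNReal.ofReal (u n + t)
          = ENNReal.ofReal (1/((k:ℝ)+1)) + ENNReal.ofReal (a + t) := by
        rw [← ENNReal.ofReal_add (by positivity) (by linarith)]
        congr 1
        rw [hun]; ring
      rw [hsplit] at hμ2
      have hμ3 : ENNReal.ofReal (a + t) ≤ μ (W Cω) :=
        (ENNReal.add_le_add_iff_left ENNReal.ofReal_ne_top).mp hμ2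
      refine Set.mem_biUnion hCmem ⟨?_, hμ3⟩
      intro i hi
      simp only [hWdef, Set.mem_iUnion, exists_prop] at hi
      obtain ⟨j, hjC, hij⟩ := hi
      exact (Finset.mem_filter.mp hjC).2 i hij
    have hTbound : ∀ J ∈ (Finset.range m).powerset,
        (Measure.pi fun _ : Fin n => μ) (T J)
          ≤ ENNReal.ofReal (Real.exp (-(n:ℝ) * (a+t))) := by
      intro J _
      by_cases hJ : ENNReal.ofReal (a+t) ≤ μ (W J)
      · have hTeq : T J = Set.univ.pi (fun _ : Fin n => (W J)ᶜ) := by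
          ext ω
          simp [hTdef, Set.mem_pi, hJ]
        rw [hTeq, Measure.pi_pi]
        have h1 : μ (W J)ᶜ ≤ ENNReal.ofReal (Real.exp (-(a+t))) := by
          rw [prob_compl_eq_one_sub (hWmeas J)]
          calc 1 - μ (W J) ≤ 1 - ENNReal.ofReal (a+t) := tsub_le_tsub_left hJ 1
          _ = ENNReal.ofReal (1 - (a+t)) := by
              rw [ENNReal.ofReal_sub _ (by linarith), ENNReal.ofReal_one]
          _ ≤ ENNReal.ofReal (Real.exp (-(a+t))) :=
              ENNReal.ofReal_le_ofReal (by nlinarith [Real.add_one_le_exp (-(a+t))])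
        calc ∏ _i : Fin n, μ (W J)ᶜ = (μ (W J)ᶜ)^n := by
              rw [Finset.prod_const, Finset.card_univ, Fintype.card_fin]
        _ ≤ (ENNReal.ofReal (Real.exp (-(a+t))))^n := pow_le_pow_left₀ zero_le h1 n
        _ = ENNReal.ofReal (Real.exp (-(a+t))^n) :=
              (ENNReal.ofReal_pow (Real.exp_nonneg _) n).symm
        _ = ENNReal.ofReal (Real.exp (-(n:ℝ)*(a+t))) := by
              rw [← Real.exp_nat_mul]
              ring_nf
      · have hTe : T J = ∅ := by
          ext ω
          simp only [hTdef, Set.mem_setOf_eq, Set.mem_empty_iff_false, iff_false, not_and]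
          exact fun _ => hJ
        rw [hTe, measure_empty]
        exact zero_le
    calc (Measure.pi fun _ : Fin n => μ)
          {ω : Fin n → X | ENNReal.ofReal (u n + t) ≤ μ (⋃ i, Metric.ball (ω i) γ)ᶜ}
        ≤ (Measure.pi fun _ : Fin n => μ) (⋃ J ∈ (Finset.range m).powerset, T J) :=
          measure_mono hincl
    _ ≤ ∑ J ∈ (Finset.range m).powerset, (Measure.pi fun _ : Fin n => μ) (T J) :=
          measure_biUnion_finset_le _ _
    _ ≤ ∑ _J ∈ (Finset.range m).powerset, ENNReal.ofReal (Real.exp (-(n:ℝ)*(a+t))) :=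
          Finset.sum_le_sum hTbound
    _ = (2^m : ℕ) * ENNReal.ofReal (Real.exp (-(n:ℝ)*(a+t))) := by
          rw [Finset.sum_const, Finset.card_powerset, Finset.card_range, nsmul_eq_mul]
    _ ≤ ENNReal.ofReal (Real.exp (-(n:ℝ)*t^2)) := by
          have hcast : ((2^m : ℕ) : ℝ≥0∞) = ENNReal.ofReal ((2:ℝ)^m) := by
            rw [ENNReal.ofReal_pow (by norm_num)]
            norm_num
          rw [hcast, ← ENNReal.ofReal_mul (by positivity)]
          apply ENNReal.ofReal_le_ofReal
          have hna : (n:ℝ) * a = 2 + (m:ℝ) * Real.log 2 := by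
            rw [hadef]
            field_simp
          have h2m : (2:ℝ)^m = Real.exp ((m:ℝ) * Real.log 2) := by
            rw [Real.exp_nat_mul, Real.exp_log (by norm_num : (0:ℝ) < 2)]
          rw [h2m, ← Real.exp_add]
          apply Real.exp_le_exp.mpr
          have hexp : (n:ℝ) * (a+t) = 2 + (m:ℝ)*Real.log 2 + (n:ℝ)*t := by
            rw [mul_add, hna]
          have htsq : t^2 ≤ t := by nlinarith
          nlinarith [mul_le_mul_of_nonneg_left htsq hnpos.le]
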